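/- Define Λ_L(D_N) = E[X*(X D_N X*)^{-1} X] where X is an L×N standard complex Gaussian matrix, D_N an N×N positive diagonal matrix, and 1 ≤ L ≤ N. Then the functional equation D_N Λ_L(D_N) + D_N^{-1} Λ_{N−L}(D_N^{-1}) = I_N holds, where Λ_{N−L}(D_N^{-1}) = E[Ω_2*(Ω_2* D_N^{-1} Ω_2)^{-1}Ω_2*] is defined via a Haar-distributed N×(N−L) matrix Ω_2 with orthonormal columns (with the convention Λ_0 = 0 when L = N). -/

import Mathlib

open Matrix MeasureTheory BigOperators

noncomputable instance matrixMeasurableSpace (m n : Type*) :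
    MeasurableSpace (Matrix m n ℂ) :=
  (inferInstance : MeasurableSpace (m → n → ℂ))

namespace Stmt9Aux

variable {α : Type*} [MeasurableSpace α]

lemma measurable_matrix_iff {m n : Type*} {f : α → Matrix m n ℂ} :
    Measurable f ↔ ∀ i j, Measurable fun a => f a i j := by
  constructor
  · intro h i j
    exact (measurable_pi_apply j).comp ((measurable_pi_apply i).comp h)
  · intro h
    exact measurable_pi_iff.2 fun i => measurable_pi_iff.2 fun j => h i j

lemma measurable_mulM {m n p : Type*} [Fintype n] {f : α → Matrix m n ℂ} {g : α → Matrix n p ℂ}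
    (hf : Measurable f) (hg : Measurable g) : Measurable fun a => f a * g a := by
  refine measurable_matrix_iff.2 fun i j => ?_
  simp only [Matrix.mul_apply]
  exact Finset.measurable_sum _ fun k _ =>
    (measurable_matrix_iff.1 hf i k).mul (measurable_matrix_iff.1 hg k j)

lemma measurable_ct {m n : Type*} {f : α → Matrix m n ℂ} (hf : Measurable f) :
    Measurable fun a => (f a)ᴴ := by
  refine measurable_matrix_iff.2 fun i j => ?_
  exact (continuous_star.measurable).comp (measurable_matrix_iff.1 hf j i)

lemma measurable_det {n : Type*} [Fintype n] [DecidableEq n] {f : α → Matrix n n ℂ}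
    (hf : Measurable f) : Measurable fun a => (f a).det := by
  simp only [Matrix.det_apply, Units.smul_def, zsmul_eq_mul]
  exact Finset.measurable_sum _ fun σ _ => measurable_const.mul
    (Finset.measurable_prod _ fun i _ => measurable_matrix_iff.1 hf _ _)

lemma measurable_invM {n : Type*} [Fintype n] [DecidableEq n] {f : α → Matrix n n ℂ}
    (hf : Measurable f) : Measurable fun a => (f a)⁻¹ := by
  refine measurable_matrix_iff.2 fun i j => ?_
  simp only [Matrix.inv_def, Matrix.smul_apply, Matrix.adjugate_apply, smul_eq_mul,
    Ring.inverse_eq_inv']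
  refine ((measurable_det hf).inv).mul (measurable_det ?_)
  refine measurable_matrix_iff.2 fun p q => ?_
  by_cases hpj : p = j
  · simp [Matrix.updateRow_apply, hpj]
  · simp only [Matrix.updateRow_apply, hpj, if_false]
    exact measurable_matrix_iff.1 hf p q



lemma isUnit_det_conj {m n : Type*} [Fintype m] [DecidableEq m] [Fintype n] [DecidableEq n]
    (c : n → ℝ) (hc : ∀ i, 0 < c i)
    (F : Matrix m n ℂ) (hF : F * Fᴴ = 1) :
    IsUnit (F * Matrix.diagonal (fun i => (c i : ℂ)) * Fᴴ).det := by
  rw [isUnit_iff_ne_zero]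
  intro hdet
  obtain ⟨v, hv0, hv⟩ := (Matrix.exists_mulVec_eq_zero_iff).2 hdet
  set w := Fᴴ *ᵥ v with hwdef
  have hsw : star v ᵥ* F = star w := by
    rw [hwdef, Matrix.star_mulVec, Matrix.conjTranspose_conjTranspose]
  have key : star v ⬝ᵥ ((F * Matrix.diagonal (fun i => (c i : ℂ)) * Fᴴ) *ᵥ v) = 0 := by
    rw [hv, dotProduct_zero]
  have e1 : star v ⬝ᵥ ((F * Matrix.diagonal (fun i => (c i : ℂ)) * Fᴴ) *ᵥ v)
      = ((∑ i, c i * Complex.normSq (w i) : ℝ) : ℂ) := by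
    rw [← Matrix.mulVec_mulVec, ← Matrix.mulVec_mulVec, Matrix.dotProduct_mulVec, hsw,
      ← hwdef]
    simp only [dotProduct, Matrix.mulVec_diagonal, Pi.star_apply]
    push_cast
    refine Finset.sum_congr rfl fun i _ => ?_
    simp only [Complex.star_def, Complex.normSq_eq_conj_mul_self]
    ring
  rw [e1] at key
  have hsum : (∑ i, c i * Complex.normSq (w i) : ℝ) = 0 := by exact_mod_cast key
  have hw0 : w = 0 := by
    funext i
    have h1 := (Finset.sum_eq_zero_iff_of_nonneg (fun i _ =>
      mul_nonneg (hc i).le (Complex.normSq_nonneg _))).1 hsum i (Finset.mem_univ i)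
    have h2 : Complex.normSq (w i) = 0 := by
      rcases mul_eq_zero.1 h1 with h | h
      · exact absurd h (ne_of_gt (hc i))
      · exact h
    simpa using Complex.normSq_eq_zero.1 h2
  apply hv0
  calc v = (F * Fᴴ) *ᵥ v := by rw [hF, Matrix.one_mulVec]
  _ = F *ᵥ w := by rw [← Matrix.mulVec_mulVec, ← hwdef]
  _ = 0 := by rw [hw0, Matrix.mulVec_zero]

lemma det_id {m p n : Type*} [Fintype m] [DecidableEq m] [Fintype p] [DecidableEq p]
    [Fintype n] [DecidableEq n] (e : n ≃ m ⊕ p)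
    (c : n → ℝ) (hc : ∀ i, 0 < c i)
    (F : Matrix m n ℂ) (V : Matrix n p ℂ)
    (hF : F * Fᴴ = 1) (hV : Vᴴ * V = 1) (hFV : F * V = 0) :
    (Fᴴ * (F * Matrix.diagonal (fun i => (c i : ℂ)) * Fᴴ)⁻¹ * F) *
        Matrix.diagonal (fun i => (c i : ℂ)) +
      (Matrix.diagonal (fun i => (c i : ℂ)))⁻¹ *
        (V * (Vᴴ * (Matrix.diagonal (fun i => (c i : ℂ)))⁻¹ * V)⁻¹ * Vᴴ) = 1 := by
  set D : Matrix n n ℂ := Matrix.diagonal (fun i => (c i : ℂ)) with hD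
  set s : n → ℂ := fun i => (Real.sqrt (c i) : ℂ) with hs
  set S : Matrix n n ℂ := Matrix.diagonal s with hSdef
  have hss : (fun i => s i * s i) = fun i => (c i : ℂ) := by
    funext i
    rw [hs, ← Complex.ofReal_mul, Real.mul_self_sqrt (hc i).le]
  have hS2 : S * S = D := by
    rw [hSdef, hD, Matrix.diagonal_mul_diagonal, hss]
  have hstars : star s = s := by
    funext i
    simp [hs, Complex.conj_ofReal]
  have hSH : Sᴴ = S := by
    rw [hSdef, Matrix.diagonal_conjTranspose, hstars]
  have hSdet : IsUnit S.det := by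
    rw [hSdef, Matrix.det_diagonal, isUnit_iff_ne_zero]
    refine Finset.prod_ne_zero_iff.2 fun i _ => ?_
    simp [hs, Real.sqrt_ne_zero'.2 (hc i)]
  have hSS : S * S⁻¹ = 1 := Matrix.mul_nonsing_inv _ hSdet
  have hSS' : S⁻¹ * S = 1 := Matrix.nonsing_inv_mul _ hSdet
  have hSinvH : (S⁻¹)ᴴ = S⁻¹ := by
    rw [Matrix.conjTranspose_nonsing_inv, hSH]
  have hDinv : D⁻¹ = S⁻¹ * S⁻¹ := by
    rw [← hS2, Matrix.mul_inv_rev]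
  have hDinv' : D⁻¹ = Matrix.diagonal (fun i => (((c i)⁻¹ : ℝ) : ℂ)) := by
    refine Matrix.inv_eq_right_inv ?_
    rw [hD, Matrix.diagonal_mul_diagonal]
    have h9 : (fun i => (c i : ℂ) * (((c i)⁻¹ : ℝ) : ℂ)) = fun _ => (1 : ℂ) := funext fun i => by
      rw [← Complex.ofReal_mul, mul_inv_cancel₀ (hc i).ne']; norm_num
    rw [h9, Matrix.diagonal_one]
  set G : Matrix m n ℂ := F * S with hG
  set H : Matrix p n ℂ := Vᴴ * S⁻¹ with hH
  set M₁ : Matrix m m ℂ := F * D * Fᴴ with hM1def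
  set M₂ : Matrix p p ℂ := Vᴴ * D⁻¹ * V with hM2def
  have hGH' : Gᴴ = S * Fᴴ := by rw [hG, Matrix.conjTranspose_mul, hSH]
  have hHH' : Hᴴ = S⁻¹ * V := by
    rw [hH, Matrix.conjTranspose_mul, hSinvH, Matrix.conjTranspose_conjTranspose]
  have hGG : G * Gᴴ = M₁ := by
    rw [hG, hGH', hM1def, ← hS2]
    simp only [Matrix.mul_assoc]
  have hHHm : H * Hᴴ = M₂ := by
    rw [hH, hHH', hM2def, hDinv]
    simp only [Matrix.mul_assoc]
  have hGHzero : G * Hᴴ = 0 := by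
    rw [hG, hHH']
    calc F * S * (S⁻¹ * V) = F * (S * S⁻¹) * V := by simp only [Matrix.mul_assoc]
    _ = 0 := by rw [hSS, Matrix.mul_one, hFV]
  have hHGzero : H * Gᴴ = 0 := by
    have h3 : (G * Hᴴ)ᴴ = H * Gᴴ := by
      rw [Matrix.conjTranspose_mul, Matrix.conjTranspose_conjTranspose]
    rw [← h3, hGHzero, Matrix.conjTranspose_zero]
  have hM1 : IsUnit M₁.det := isUnit_det_conj c hc F hF
  have hM2 : IsUnit M₂.det := by
    have h4 := isUnit_det_conj (fun i => (c i)⁻¹) (fun i => inv_pos.2 (hc i)) Vᴴ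
      (by rw [Matrix.conjTranspose_conjTranspose, hV])
    rw [hM2def, hDinv']
    simpa using h4
  set R : Matrix (m ⊕ p) n ℂ := Matrix.fromRows G H with hR
  have hRH : Rᴴ = Matrix.fromCols Gᴴ Hᴴ := by
    rw [hR, Matrix.conjTranspose_fromRows_eq_fromCols_conjTranspose]
  have hKK : R * Rᴴ = Matrix.fromBlocks M₁ 0 0 M₂ := by
    rw [hR, hRH, Matrix.fromRows_mul_fromCols, hGG, hHHm, hGHzero, hHGzero]
  have hKKinv : (R * Rᴴ)⁻¹ = Matrix.fromBlocks M₁⁻¹ 0 0 M₂⁻¹ := by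
    rw [hKK]
    refine Matrix.inv_eq_right_inv ?_
    rw [Matrix.fromBlocks_multiply]
    simp [Matrix.mul_nonsing_inv _ hM1, Matrix.mul_nonsing_inv _ hM2, Matrix.fromBlocks_one]
  set R' : Matrix n n ℂ := R.submatrix e id with hR'
  have hsub : R'ᴴ = Rᴴ.submatrix id ⇑e := by rw [hR', Matrix.conjTranspose_submatrix]
  have hR'R' : R' * R'ᴴ = (R * Rᴴ).submatrix e e := by
    rw [hR', hsub]
    have h5 := Matrix.submatrix_mul_equiv R Rᴴ (⇑e) (Equiv.refl n) (⇑e)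
    simpa using h5
  have hdetR' : IsUnit R'.det := by
    have h1 : IsUnit (R' * R'ᴴ).det := by
      rw [hR'R', hKK, Matrix.det_submatrix_equiv_self, Matrix.det_fromBlocks_zero₂₁]
      exact hM1.mul hM2
    rw [Matrix.det_mul] at h1
    exact isUnit_of_mul_isUnit_left h1
  have hdetR'H : IsUnit R'ᴴ.det := by
    rw [Matrix.det_conjTranspose]
    exact hdetR'.star
  have main : Gᴴ * M₁⁻¹ * G + Hᴴ * M₂⁻¹ * H = 1 := by
    have key : R'ᴴ * (R' * R'ᴴ)⁻¹ * R' = 1 := by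
      rw [Matrix.mul_inv_rev]
      calc R'ᴴ * (R'ᴴ⁻¹ * R'⁻¹) * R' = (R'ᴴ * R'ᴴ⁻¹) * (R'⁻¹ * R') := by
            simp only [Matrix.mul_assoc]
      _ = 1 := by
            rw [Matrix.mul_nonsing_inv _ hdetR'H, Matrix.nonsing_inv_mul _ hdetR',
              Matrix.one_mul]
    have h1 : R'ᴴ * (R' * R'ᴴ)⁻¹ = (Rᴴ * (R * Rᴴ)⁻¹).submatrix id ⇑e := by
      rw [hR'R', Matrix.inv_submatrix_equiv, hsub]
      exact Matrix.submatrix_mul_equiv Rᴴ (R * Rᴴ)⁻¹ id e ⇑e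
    have h2 : R'ᴴ * (R' * R'ᴴ)⁻¹ * R' = Rᴴ * (R * Rᴴ)⁻¹ * R := by
      rw [h1, hR']
      have h6 := Matrix.submatrix_mul_equiv (Rᴴ * (R * Rᴴ)⁻¹) R (id : n → n) e (id : n → n)
      rw [h6]
      exact Matrix.submatrix_id_id _
    have h7 : Rᴴ * (R * Rᴴ)⁻¹ * R = 1 := by rw [← h2, key]
    rw [hKKinv, hRH, hR, Matrix.fromCols_mul_fromBlocks] at h7
    simpa [Matrix.fromCols_mul_fromRows] using h7
  have e1 : S⁻¹ * (Gᴴ * M₁⁻¹ * G) * S = Fᴴ * M₁⁻¹ * F * D := by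
    rw [hGH', hG]
    simp only [Matrix.mul_assoc]
    rw [hS2, Matrix.nonsing_inv_mul_cancel_left _ _ hSdet]
  have e2 : S⁻¹ * (Hᴴ * M₂⁻¹ * H) * S = D⁻¹ * (V * M₂⁻¹ * Vᴴ) := by
    rw [hHH', hH, hDinv]
    simp only [Matrix.mul_assoc, hSS', Matrix.mul_one]
  have hfin := congrArg (fun X => S⁻¹ * X * S) main
  simp only [Matrix.mul_add, Matrix.add_mul, Matrix.mul_one] at hfin
  rw [e1, e2, hSS'] at hfin
  exact hfin



variable {L' N' : ℕ}

noncomputable def F0 (e : Fin N' ≃ Fin L' ⊕ Fin (N' - L')) : Matrix (Fin L') (Fin N') ℂ :=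
  Matrix.of fun i j => if e j = Sum.inl i then 1 else 0

noncomputable def V0 (e : Fin N' ≃ Fin L' ⊕ Fin (N' - L')) :
    Matrix (Fin N') (Fin (N' - L')) ℂ :=
  Matrix.of fun j k => if e j = Sum.inr k then 1 else 0

lemma sum_reindex (e : Fin N' ≃ Fin L' ⊕ Fin (N' - L')) (f : Fin N' → ℂ) :
    ∑ j, f j = ∑ x, f (e.symm x) :=
  Fintype.sum_equiv e f (fun x => f (e.symm x)) (fun j => by simp)

lemma F0_mul_entry (e : Fin N' ≃ Fin L' ⊕ Fin (N' - L')) (W : Matrix (Fin N') (Fin N') ℂ)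
    (i : Fin L') (q : Fin N') : (F0 e * W) i q = W (e.symm (Sum.inl i)) q := by
  rw [Matrix.mul_apply, sum_reindex e]
  simp only [F0, Matrix.of_apply, Equiv.apply_symm_apply, ite_mul, one_mul, zero_mul]
  rw [Finset.sum_ite_eq']
  simp

lemma mul_V0_entry (e : Fin N' ≃ Fin L' ⊕ Fin (N' - L')) (W : Matrix (Fin N') (Fin N') ℂ)
    (p : Fin N') (k : Fin (N' - L')) : (W * V0 e) p k = W p (e.symm (Sum.inr k)) := by
  rw [Matrix.mul_apply, sum_reindex e]
  simp only [V0, Matrix.of_apply, Equiv.apply_symm_apply, mul_ite, mul_one, mul_zero]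
  rw [Finset.sum_ite_eq']
  simp

lemma F0_unitary (e : Fin N' ≃ Fin L' ⊕ Fin (N' - L')) : F0 e * (F0 e)ᴴ = 1 := by
  ext i j
  rw [Matrix.mul_apply, sum_reindex e]
  simp only [F0, Matrix.conjTranspose_apply, Matrix.of_apply, Equiv.apply_symm_apply,
    apply_ite (star : ℂ → ℂ), star_one, star_zero, ite_mul, one_mul, zero_mul]
  rw [Finset.sum_ite_eq']
  simp [Matrix.one_apply, eq_comm]

lemma V0_unitary (e : Fin N' ≃ Fin L' ⊕ Fin (N' - L')) : (V0 e)ᴴ * V0 e = 1 := by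
  ext k l
  rw [Matrix.mul_apply, sum_reindex e]
  simp only [V0, Matrix.conjTranspose_apply, Matrix.of_apply, Equiv.apply_symm_apply,
    apply_ite (star : ℂ → ℂ), star_one, star_zero, ite_mul, one_mul, zero_mul]
  rw [Finset.sum_ite_eq']
  simp [Matrix.one_apply, eq_comm]

lemma F0_mul_V0 (e : Fin N' ≃ Fin L' ⊕ Fin (N' - L')) : F0 e * V0 e = 0 := by
  ext i k
  rw [Matrix.mul_apply, sum_reindex e]
  simp only [F0, V0, Matrix.of_apply, Equiv.apply_symm_apply, ite_mul, one_mul, zero_mul]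
  rw [Finset.sum_ite_eq']
  simp

lemma exists_unitary_row (e : Fin N' ≃ Fin L' ⊕ Fin (N' - L'))
    (F : Matrix (Fin L') (Fin N') ℂ) (hF : F * Fᴴ = 1) :
    ∃ W ∈ Matrix.unitaryGroup (Fin N') ℂ, F = F0 e * W := by
  classical
  set r : Fin L' → EuclideanSpace ℂ (Fin N') :=
    fun i => (WithLp.equiv 2 _).symm (F i) with hr
  have horth : ∀ i j, inner ℂ (r i) (r j) = if i = j then (1 : ℂ) else 0 := by
    intro i j
    have : inner ℂ (r i) (r j) = (F * Fᴴ) j i := by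
      rw [Matrix.mul_apply, PiLp.inner_apply]
      refine Finset.sum_congr rfl fun k _ => ?_
      simp [hr, Matrix.conjTranspose_apply, RCLike.inner_apply, mul_comm]
    rw [this, hF, Matrix.one_apply]
    simp [eq_comm]
  have card_ι : Module.finrank ℂ (EuclideanSpace ℂ (Fin N')) =
      Fintype.card (Fin L' ⊕ Fin (N' - L')) := by
    rw [finrank_euclideanSpace]
    simp [← Fintype.card_congr e]
  set v : Fin L' ⊕ Fin (N' - L') → EuclideanSpace ℂ (Fin N') := Sum.elim r 0 with hv
  have hvon : Orthonormal ℂ ((Set.range Sum.inl).restrict v) := by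
    rw [orthonormal_iff_ite]
    rintro ⟨x, i, rfl⟩ ⟨y, j, rfl⟩
    simp only [Set.restrict_apply, hv, Sum.elim_inl]
    show inner ℂ (r i) (r j) = _
    rw [horth i j]
    congr 1
    simp [Subtype.ext_iff]
  obtain ⟨b, hb⟩ := hvon.exists_orthonormalBasis_extension_of_card_eq card_ι
  have hbl : ∀ i, b (Sum.inl i) = r i := fun i => hb _ (Set.mem_range_self i)
  set W : Matrix (Fin N') (Fin N') ℂ := Matrix.of fun p q => b (e p) q with hW
  have hWon : ∀ x y, (∑ k, star (b x k) * b y k) = if x = y then (1:ℂ) else 0 := by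
    intro x y
    have h := orthonormal_iff_ite.1 b.orthonormal x y
    rw [PiLp.inner_apply] at h
    simpa [RCLike.inner_apply, RCLike.star_def, mul_comm] using h
  refine ⟨W, ?_, ?_⟩
  · rw [Matrix.mem_unitaryGroup_iff]
    ext p q
    rw [Matrix.mul_apply, Matrix.one_apply]
    have : ∀ k, W p k * (star W : Matrix _ _ ℂ) k q = star (b (e q) k) * b (e p) k := by
      intro k
      simp [hW, Matrix.star_apply, mul_comm]
    rw [Finset.sum_congr rfl (fun k _ => this k), hWon]
    simp [EmbeddingLike.apply_eq_iff_eq, eq_comm]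
  · ext i q
    rw [F0_mul_entry e W i q]
    simp only [hW, Matrix.of_apply, Equiv.apply_symm_apply, hbl]
    rfl

lemma exists_unitary_col (e : Fin N' ≃ Fin L' ⊕ Fin (N' - L'))
    (V : Matrix (Fin N') (Fin (N' - L')) ℂ) (hV : Vᴴ * V = 1) :
    ∃ W ∈ Matrix.unitaryGroup (Fin N') ℂ, V = W * V0 e := by
  classical
  set c : Fin (N' - L') → EuclideanSpace ℂ (Fin N') :=
    fun k => (WithLp.equiv 2 _).symm (fun j => star (V j k)) with hc
  have horth : ∀ k l, inner ℂ (c k) (c l) = if k = l then (1 : ℂ) else 0 := by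
    intro k l
    have : inner ℂ (c k) (c l) = star ((Vᴴ * V) k l) := by
      rw [Matrix.mul_apply, PiLp.inner_apply, star_sum]
      refine Finset.sum_congr rfl fun j _ => ?_
      simp [hc, Matrix.conjTranspose_apply, RCLike.inner_apply, mul_comm]
    rw [this, hV, Matrix.one_apply]
    simp
  have card_ι : Module.finrank ℂ (EuclideanSpace ℂ (Fin N')) =
      Fintype.card (Fin L' ⊕ Fin (N' - L')) := by
    rw [finrank_euclideanSpace]
    simp [← Fintype.card_congr e]
  set v : Fin L' ⊕ Fin (N' - L') → EuclideanSpace ℂ (Fin N') := Sum.elim 0 c with hv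
  have hvon : Orthonormal ℂ ((Set.range Sum.inr).restrict v) := by
    rw [orthonormal_iff_ite]
    rintro ⟨x, k, rfl⟩ ⟨y, l, rfl⟩
    simp only [Set.restrict_apply, hv, Sum.elim_inr]
    show inner ℂ (c k) (c l) = _
    rw [horth k l]
    congr 1
    simp [Subtype.ext_iff]
  obtain ⟨b, hb⟩ := hvon.exists_orthonormalBasis_extension_of_card_eq card_ι
  have hbr : ∀ k, b (Sum.inr k) = c k := fun k => hb _ (Set.mem_range_self k)
  set W : Matrix (Fin N') (Fin N') ℂ := Matrix.of fun p q => star (b (e q) p) with hW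
  have hWon : ∀ x y, (∑ k, star (b x k) * b y k) = if x = y then (1:ℂ) else 0 := by
    intro x y
    have h := orthonormal_iff_ite.1 b.orthonormal x y
    rw [PiLp.inner_apply] at h
    simpa [RCLike.inner_apply, RCLike.star_def, mul_comm] using h
  refine ⟨W, ?_, ?_⟩
  · rw [Matrix.mem_unitaryGroup_iff']
    ext q q'
    rw [Matrix.mul_apply, Matrix.one_apply]
    have : ∀ p, (star W : Matrix _ _ ℂ) q p * W p q' = star (b (e q') p) * b (e q) p := by
      intro p
      simp [hW, Matrix.star_apply, mul_comm]
    rw [Finset.sum_congr rfl (fun p _ => this p), hWon]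
    simp [EmbeddingLike.apply_eq_iff_eq, eq_comm]
  · ext p k
    rw [mul_V0_entry e W p k]
    simp only [hW, Matrix.of_apply, Equiv.apply_symm_apply, hbr]
    simp [hc]



instance matrixBorel (m n : Type*) [Countable m] [Countable n] : BorelSpace (Matrix m n ℂ) :=
  Pi.borelSpace

variable (n : ℕ)

abbrev UG (n : ℕ) := Matrix.unitaryGroup (Fin n) ℂ

instance : IsTopologicalGroup (UG n) where
  continuous_mul := by
    apply continuous_induced_rng.2
    exact (continuous_subtype_val.comp continuous_fst).mul
      (continuous_subtype_val.comp continuous_snd)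
  continuous_inv := by
    apply continuous_induced_rng.2
    exact continuous_star.comp continuous_subtype_val

set_option maxHeartbeats 1000000 in
instance : CompactSpace (UG n) := by
  have hclosed : IsClosed ((Matrix.unitaryGroup (Fin n) ℂ : Set (Matrix (Fin n) (Fin n) ℂ))) := by
    have heq : (Matrix.unitaryGroup (Fin n) ℂ : Set (Matrix (Fin n) (Fin n) ℂ)) =
        ((fun A : Matrix (Fin n) (Fin n) ℂ => (star A * A, A * star A)) ⁻¹' {((1 : Matrix (Fin n) (Fin n) ℂ), (1 : Matrix (Fin n) (Fin n) ℂ))}) := by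
      ext A
      constructor
      · intro hA
        have h := Unitary.mem_iff.mp hA
        simp only [Set.mem_preimage, Set.mem_singleton_iff, Prod.mk.injEq]
        exact ⟨h.1, h.2⟩
      · intro hA
        simp only [Set.mem_preimage, Set.mem_singleton_iff, Prod.mk.injEq] at hA
        exact Unitary.mem_iff.mpr ⟨hA.1, hA.2⟩
    rw [heq]
    exact IsClosed.preimage
      ((continuous_star.mul continuous_id).prodMk (continuous_id.mul continuous_star))
      isClosed_singleton
  have hsub : (Matrix.unitaryGroup (Fin n) ℂ : Set (Matrix (Fin n) (Fin n) ℂ)) ⊆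
      ((Set.univ.pi fun _ : Fin n => Set.univ.pi fun _ : Fin n =>
        Metric.closedBall (0 : ℂ) 1) : Set (Fin n → Fin n → ℂ)) := by
    intro A hA
    intro i _ 
    intro j _
    rw [mem_closedBall_zero_iff]
    exact entry_norm_bound_of_unitary hA i j
  have hcomp : IsCompact ((Set.univ.pi fun _ : Fin n => Set.univ.pi fun _ : Fin n =>
      Metric.closedBall (0 : ℂ) 1) : Set (Fin n → Fin n → ℂ)) :=
    isCompact_univ_pi fun _ => isCompact_univ_pi fun _ => isCompact_closedBall _ _
  exact isCompact_iff_compactSpace.mp (hcomp.of_isClosed_subset hclosed hsub)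

instance : BorelSpace (UG n) :=
  Subtype.borelSpace (Matrix.unitaryGroup (Fin n) ℂ : Set (Matrix (Fin n) (Fin n) ℂ))

noncomputable def haarUG : Measure (UG n) :=
  MeasureTheory.Measure.haarMeasure (⊤ : TopologicalSpace.PositiveCompacts (UG n))

instance : IsProbabilityMeasure (haarUG n) :=
  ⟨by rw [haarUG, ← TopologicalSpace.PositiveCompacts.coe_top (α := UG n),
      MeasureTheory.Measure.haarMeasure_self]⟩

instance : (haarUG n).IsMulLeftInvariant := by
  rw [haarUG]; infer_instance

instance : IsProbabilityMeasure (haarUG n).inv := by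
  constructor
  rw [MeasureTheory.Measure.inv_apply, Set.inv_univ]
  exact measure_univ

instance : (haarUG n).inv.IsMulRightInvariant := by
  infer_instance

example (f : UG n → ℂ) (W : UG n) : ∫ U, f (W * U) ∂(haarUG n) = ∫ U, f U ∂(haarUG n) :=
  MeasureTheory.integral_mul_left_eq_self f W

example (f : UG n → ℂ) (W : UG n) :
    ∫ U, f (U * W) ∂(haarUG n).inv = ∫ U, f U ∂(haarUG n).inv :=
  MeasureTheory.integral_mul_right_eq_self f W

example (f : UG n → ℂ) (hf : Measurable f) :
    ∫ U, f U ∂(haarUG n).inv = ∫ U, f U⁻¹ ∂(haarUG n) := by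
  rw [MeasureTheory.Measure.inv, MeasureTheory.integral_map measurable_inv.aemeasurable
    hf.aestronglyMeasurable]


lemma diag_inv {n : Type*} [Fintype n] [DecidableEq n] (c : n → ℝ) (hc : ∀ i, 0 < c i) :
    (Matrix.diagonal (fun i => (c i : ℂ)))⁻¹ = Matrix.diagonal (fun i => ((c i : ℂ))⁻¹) := by
  refine Matrix.inv_eq_right_inv ?_
  rw [Matrix.diagonal_mul_diagonal]
  have h9 : (fun i => (c i : ℂ) * ((c i : ℂ))⁻¹) = fun _ => (1 : ℂ) := funext fun i => by
    rw [mul_inv_cancel₀]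
    exact_mod_cast (hc i).ne'
  rw [h9, Matrix.diagonal_one]

lemma integral_comp_eq {Ω X : Type*} [MeasurableSpace Ω] [MeasurableSpace X] {μ : Measure Ω}
    {f g : Ω → X} (hfg : Measure.map f μ = Measure.map g μ) (hf : Measurable f)
    (hg : Measurable g) {h : X → ℂ} (hh : Measurable h) :
    ∫ ω, h (f ω) ∂μ = ∫ ω, h (g ω) ∂μ := by
  rw [← integral_map hf.aemeasurable hh.aestronglyMeasurable, hfg,
    integral_map hg.aemeasurable hh.aestronglyMeasurable]

lemma lintegral_comp_eq {Ω X : Type*} [MeasurableSpace Ω] [MeasurableSpace X] {μ : Measure Ω}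
    {f g : Ω → X} (hfg : Measure.map f μ = Measure.map g μ) (hf : Measurable f)
    (hg : Measurable g) {h : X → ENNReal} (hh : Measurable h) :
    ∫⁻ ω, h (f ω) ∂μ = ∫⁻ ω, h (g ω) ∂μ := by
  rw [← lintegral_map hh hf, hfg, lintegral_map hh hg]

end Stmt9Aux

/-- Entrywise expectation of a random matrix. -/
noncomputable def matExp {Ω : Type*} [MeasurableSpace Ω] (μ : Measure Ω)
    {m n : Type*} (F : Ω → Matrix m n ℂ) : Matrix m n ℂ :=
  Matrix.of fun i j => ∫ ω, F ω i j ∂μ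

open Stmt9Aux

/-- The functional equation `D_N Λ_L(D_N) + D_N⁻¹ Λ_{N−L}(D_N⁻¹) = I_N`, where
`Λ_L(D) = E_Φ[Φᴴ(ΦDΦᴴ)⁻¹Φ]` for Haar `Φ` on the `L × N` Stiefel manifold and
`Λ_{N−L}(D⁻¹) = E[Ω₂(Ω₂ᴴD⁻¹Ω₂)⁻¹Ω₂ᴴ]` for Haar `Ω₂` with `N−L` orthonormal columns
(when `L = N` the second term is `0`). -/
theorem stmt9 {Ω Ω' : Type*} [MeasurableSpace Ω] [MeasurableSpace Ω']
    (μ : Measure Ω) [IsProbabilityMeasure μ]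
    (μ' : Measure Ω') [IsProbabilityMeasure μ']
    {L N : ℕ} (hL : 1 ≤ L) (hLN : L ≤ N)
    (d : Fin N → ℝ) (hd : ∀ i, 0 < d i)
    (Φ : Ω → Matrix (Fin L) (Fin N) ℂ) (hMeasΦ : Measurable Φ)
    (hStiefelΦ : ∀ ω, Φ ω * (Φ ω)ᴴ = 1)
    (hInvΦ : ∀ Θ ∈ Matrix.unitaryGroup (Fin N) ℂ,
      Measure.map (fun ω => Φ ω * Θ) μ = Measure.map Φ μ)
    (Ω₂ : Ω' → Matrix (Fin N) (Fin (N - L)) ℂ) (hMeasΩ₂ : Measurable Ω₂)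
    (hStiefelΩ₂ : ∀ ω, (Ω₂ ω)ᴴ * Ω₂ ω = 1)
    (hInvΩ₂ : ∀ U ∈ Matrix.unitaryGroup (Fin N) ℂ,
      Measure.map (fun ω => U * Ω₂ ω) μ' = Measure.map Ω₂ μ')
    (hint1 : ∀ i j,
      Integrable (fun ω =>
        ((Φ ω)ᴴ * (Φ ω * Matrix.diagonal (fun i => (d i : ℂ)) * (Φ ω)ᴴ)⁻¹ * Φ ω) i j) μ)
    (hint2 : ∀ i j,
      Integrable (fun ω =>
        (Ω₂ ω * ((Ω₂ ω)ᴴ * (Matrix.diagonal (fun i => (d i : ℂ)))⁻¹ * Ω₂ ω)⁻¹ * (Ω₂ ω)ᴴ) i j) μ') :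
    Matrix.diagonal (fun i => (d i : ℂ)) *
        matExp μ (fun ω =>
          (Φ ω)ᴴ * (Φ ω * Matrix.diagonal (fun i => (d i : ℂ)) * (Φ ω)ᴴ)⁻¹ * Φ ω) +
      (Matrix.diagonal (fun i => (d i : ℂ)))⁻¹ *
        matExp μ' (fun ω =>
          Ω₂ ω * ((Ω₂ ω)ᴴ * (Matrix.diagonal (fun i => (d i : ℂ)))⁻¹ * Ω₂ ω)⁻¹ * (Ω₂ ω)ᴴ)
      = 1 := by
  classical
  have hsum : L + (N - L) = N := Nat.add_sub_cancel' hLN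
  set e : Fin N ≃ Fin L ⊕ Fin (N - L) :=
    (finCongr hsum.symm).trans finSumFinEquiv.symm with he
  set D : Matrix (Fin N) (Fin N) ℂ := Matrix.diagonal (fun i => (d i : ℂ)) with hD
  set GA : Matrix (Fin L) (Fin N) ℂ → Matrix (Fin N) (Fin N) ℂ :=
    fun M => Mᴴ * (M * D * Mᴴ)⁻¹ * M with hGAdef
  set GB : Matrix (Fin N) (Fin (N - L)) ℂ → Matrix (Fin N) (Fin N) ℂ :=
    fun M => M * (Mᴴ * D⁻¹ * M)⁻¹ * Mᴴ with hGBdef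
  have hGAm : Measurable GA :=
    measurable_mulM (measurable_mulM (measurable_ct measurable_id)
      (measurable_invM (measurable_mulM (measurable_mulM measurable_id measurable_const)
        (measurable_ct measurable_id)))) measurable_id
  have hGBm : Measurable GB :=
    measurable_mulM (measurable_mulM measurable_id
      (measurable_invM (measurable_mulM (measurable_mulM (measurable_ct measurable_id)
        measurable_const) measurable_id))) (measurable_ct measurable_id)
  have hGAe : ∀ i j, Measurable fun M => GA M i j := fun i j => measurable_matrix_iff.1 hGAm i j
  have hGBe : ∀ i j, Measurable fun M => GB M i j := fun i j => measurable_matrix_iff.1 hGBm i j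
  have hcoe : Measurable (fun U : UG N => (U : Matrix (Fin N) (Fin N) ℂ)) :=
    continuous_subtype_val.measurable
  set Fz : Matrix (Fin L) (Fin N) ℂ := F0 e with hFz
  set Vz : Matrix (Fin N) (Fin (N - L)) ℂ := V0 e with hVz
  -- measurability of the two reference maps
  have hfAm : ∀ i j, Measurable fun U : UG N => GA (Fz * (U : Matrix (Fin N) (Fin N) ℂ)) i j := fun i j =>
    (hGAe i j).comp (measurable_mulM measurable_const hcoe)
  have hfBm : ∀ i j, Measurable fun U : UG N => GB (((U : Matrix (Fin N) (Fin N) ℂ))ᴴ * Vz) i j := fun i j =>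
    (hGBe i j).comp (measurable_mulM (measurable_ct hcoe) measurable_const)
  -- μ ≠ 0 for a.e. nonemptiness
  haveI hμae : (MeasureTheory.ae μ).NeBot :=
    MeasureTheory.ae_neBot.2 (IsProbabilityMeasure.ne_zero μ)
  ---- Step A: the Φ side
  have hmprodA : ∀ i j, Measurable (fun p : UG N × Ω => GA (Φ p.2 * (p.1 : Matrix (Fin N) (Fin N) ℂ)) i j) := by
    intro i j
    exact (hGAe i j).comp (measurable_mulM (hMeasΦ.comp measurable_snd)
      (hcoe.comp measurable_fst))
  have hAinner : ∀ (i j : Fin N) (U : UG N),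
      ∫ ω, GA (Φ ω * (U : Matrix (Fin N) (Fin N) ℂ)) i j ∂μ = ∫ ω, GA (Φ ω) i j ∂μ := fun i j U =>
    integral_comp_eq (hInvΦ (U : Matrix (Fin N) (Fin N) ℂ) U.2) (measurable_mulM hMeasΦ measurable_const) hMeasΦ (hGAe i j)
  have hprodA : ∀ i j, Integrable (fun p : UG N × Ω => GA (Φ p.2 * (p.1 : Matrix (Fin N) (Fin N) ℂ)) i j)
      ((haarUG N).prod μ) := by
    intro i j
    refine ⟨(hmprodA i j).aestronglyMeasurable, ?_⟩
    rw [MeasureTheory.HasFiniteIntegral]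
    rw [MeasureTheory.lintegral_prod _ ((hmprodA i j).enorm.aemeasurable)]
    have hin : ∀ U : UG N, ∫⁻ ω, (‖GA (Φ ω * (U : Matrix (Fin N) (Fin N) ℂ)) i j‖ₑ : ENNReal) ∂μ
        = ∫⁻ ω, (‖GA (Φ ω) i j‖ₑ : ENNReal) ∂μ := fun U =>
      lintegral_comp_eq (hInvΦ (U : Matrix (Fin N) (Fin N) ℂ) U.2) (measurable_mulM hMeasΦ measurable_const) hMeasΦ
        ((hGAe i j).enorm)
    rw [lintegral_congr hin, lintegral_const]
    have hfin : (∫⁻ ω, (‖GA (Φ ω) i j‖ₑ : ENNReal) ∂μ) < ⊤ := (hint1 i j).2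
    simpa using hfin
  have hEaA : ∀ i j, ∫ ω, GA (Φ ω) i j ∂μ = ∫ U, GA (Fz * (U : Matrix (Fin N) (Fin N) ℂ)) i j ∂(haarUG N) := by
    intro i j
    have hswap := MeasureTheory.integral_integral_swap
      (f := fun (U : UG N) (ω : Ω) => GA (Φ ω * (U : Matrix (Fin N) (Fin N) ℂ)) i j) (hprodA i j)
    have h1 : ∫ U, (∫ ω, GA (Φ ω * (U : Matrix (Fin N) (Fin N) ℂ)) i j ∂μ) ∂(haarUG N) = ∫ ω, GA (Φ ω) i j ∂μ := by
      rw [integral_congr_ae (Filter.Eventually.of_forall fun U => hAinner i j U)]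
      simp [measure_univ]
    have h2 : ∀ ω, (∫ U, GA (Φ ω * (U : Matrix (Fin N) (Fin N) ℂ)) i j ∂(haarUG N))
        = ∫ U, GA (Fz * (U : Matrix (Fin N) (Fin N) ℂ)) i j ∂(haarUG N) := by
      intro ω
      obtain ⟨W, hWmem, hWeq⟩ := exists_unitary_row e (Φ ω) (hStiefelΦ ω)
      have hptw : ∀ U : UG N, GA (Φ ω * (U : Matrix (Fin N) (Fin N) ℂ)) i j
          = GA (Fz * ((⟨W, hWmem⟩ * U : UG N) : Matrix (Fin N) (Fin N) ℂ)) i j := by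
        intro U
        rw [hWeq, Matrix.UnitaryGroup.mul_val, ← Matrix.mul_assoc]
      rw [integral_congr_ae (Filter.Eventually.of_forall hptw)]
      exact integral_mul_left_eq_self (fun U : UG N => GA (Fz * (U : Matrix (Fin N) (Fin N) ℂ)) i j) ⟨W, hWmem⟩
    have h3 : ∫ ω, (∫ U, GA (Φ ω * (U : Matrix (Fin N) (Fin N) ℂ)) i j ∂(haarUG N)) ∂μ
        = ∫ U, GA (Fz * (U : Matrix (Fin N) (Fin N) ℂ)) i j ∂(haarUG N) := by
      rw [integral_congr_ae (Filter.Eventually.of_forall h2)]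
      simp [measure_univ]
    rw [← h1, hswap, h3]
  have hfAint : ∀ i j, Integrable (fun U : UG N => GA (Fz * (U : Matrix (Fin N) (Fin N) ℂ)) i j) (haarUG N) := by
    intro i j
    have hae := (hprodA i j).prod_left_ae
    obtain ⟨ω₀, hω₀⟩ := hae.exists
    obtain ⟨W, hWmem, hWeq⟩ := exists_unitary_row e (Φ ω₀) (hStiefelΦ ω₀)
    have hmp := MeasureTheory.measurePreserving_mul_left (haarUG N) (⟨W, hWmem⟩ : UG N)
    have hcomp : ((fun U : UG N => GA (Fz * (U : Matrix (Fin N) (Fin N) ℂ)) i j) ∘ (fun U => (⟨W, hWmem⟩ : UG N) * U))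
        = fun U : UG N => GA (Φ ω₀ * (U : Matrix (Fin N) (Fin N) ℂ)) i j := by
      funext U
      simp only [Function.comp_apply]
      rw [hWeq, Matrix.UnitaryGroup.mul_val, ← Matrix.mul_assoc]
    exact (hmp.integrable_comp (hfAm i j).aestronglyMeasurable).1 (by rw [hcomp]; exact hω₀)
  ---- Step B: the Ω₂ side
  have hmprodB : ∀ i j, Measurable (fun p : UG N × Ω' => GB ((p.1 : Matrix (Fin N) (Fin N) ℂ) * Ω₂ p.2) i j) := by
    intro i j
    exact (hGBe i j).comp (measurable_mulM (hcoe.comp measurable_fst)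
      (hMeasΩ₂.comp measurable_snd))
  have hBinner : ∀ (i j : Fin N) (U : UG N),
      ∫ ω, GB ((U : Matrix (Fin N) (Fin N) ℂ) * Ω₂ ω) i j ∂μ' = ∫ ω, GB (Ω₂ ω) i j ∂μ' := fun i j U =>
    integral_comp_eq (hInvΩ₂ (U : Matrix (Fin N) (Fin N) ℂ) U.2) (measurable_mulM measurable_const hMeasΩ₂) hMeasΩ₂
      (hGBe i j)
  have hprodB : ∀ i j, Integrable (fun p : UG N × Ω' => GB ((p.1 : Matrix (Fin N) (Fin N) ℂ) * Ω₂ p.2) i j)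
      ((haarUG N).inv.prod μ') := by
    intro i j
    refine ⟨(hmprodB i j).aestronglyMeasurable, ?_⟩
    rw [MeasureTheory.HasFiniteIntegral]
    rw [MeasureTheory.lintegral_prod _ ((hmprodB i j).enorm.aemeasurable)]
    have hin : ∀ U : UG N, ∫⁻ ω, (‖GB ((U : Matrix (Fin N) (Fin N) ℂ) * Ω₂ ω) i j‖ₑ : ENNReal) ∂μ'
        = ∫⁻ ω, (‖GB (Ω₂ ω) i j‖ₑ : ENNReal) ∂μ' := fun U =>
      lintegral_comp_eq (hInvΩ₂ (U : Matrix (Fin N) (Fin N) ℂ) U.2) (measurable_mulM measurable_const hMeasΩ₂) hMeasΩ₂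
        ((hGBe i j).enorm)
    rw [lintegral_congr hin, lintegral_const]
    have hfin : (∫⁻ ω, (‖GB (Ω₂ ω) i j‖ₑ : ENNReal) ∂μ') < ⊤ := (hint2 i j).2
    simpa using hfin
  have hEbB : ∀ i j, ∫ ω, GB (Ω₂ ω) i j ∂μ'
      = ∫ U, GB (((U : Matrix (Fin N) (Fin N) ℂ))ᴴ * Vz) i j ∂(haarUG N) := by
    intro i j
    have hswap := MeasureTheory.integral_integral_swap
      (f := fun (U : UG N) (ω : Ω') => GB ((U : Matrix (Fin N) (Fin N) ℂ) * Ω₂ ω) i j) (hprodB i j)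
    have h1 : ∫ U, (∫ ω, GB ((U : Matrix (Fin N) (Fin N) ℂ) * Ω₂ ω) i j ∂μ') ∂(haarUG N).inv
        = ∫ ω, GB (Ω₂ ω) i j ∂μ' := by
      rw [integral_congr_ae (Filter.Eventually.of_forall fun U => hBinner i j U)]
      simp [measure_univ]
    have h2 : ∀ ω, (∫ U, GB ((U : Matrix (Fin N) (Fin N) ℂ) * Ω₂ ω) i j ∂(haarUG N).inv)
        = ∫ U, GB ((U : Matrix (Fin N) (Fin N) ℂ) * Vz) i j ∂(haarUG N).inv := by
      intro ω
      obtain ⟨W, hWmem, hWeq⟩ := exists_unitary_col e (Ω₂ ω) (hStiefelΩ₂ ω)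
      have hptw : ∀ U : UG N, GB ((U : Matrix (Fin N) (Fin N) ℂ) * Ω₂ ω) i j
          = GB (((U * ⟨W, hWmem⟩ : UG N) : Matrix (Fin N) (Fin N) ℂ) * Vz) i j := by
        intro U
        rw [hWeq, Matrix.UnitaryGroup.mul_val, ← Matrix.mul_assoc]
      rw [integral_congr_ae (Filter.Eventually.of_forall hptw)]
      exact integral_mul_right_eq_self (fun U : UG N => GB ((U : Matrix (Fin N) (Fin N) ℂ) * Vz) i j) ⟨W, hWmem⟩
    have h3 : ∫ ω, (∫ U, GB ((U : Matrix (Fin N) (Fin N) ℂ) * Ω₂ ω) i j ∂(haarUG N).inv) ∂μ'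
        = ∫ U, GB ((U : Matrix (Fin N) (Fin N) ℂ) * Vz) i j ∂(haarUG N).inv := by
      rw [integral_congr_ae (Filter.Eventually.of_forall h2)]
      simp [measure_univ]
    have hflip : ∫ U, GB ((U : Matrix (Fin N) (Fin N) ℂ) * Vz) i j ∂(haarUG N).inv
        = ∫ U, GB (((U : Matrix (Fin N) (Fin N) ℂ))ᴴ * Vz) i j ∂(haarUG N) := by
      have hm9 : Measurable fun U : UG N => GB ((U : Matrix (Fin N) (Fin N) ℂ) * Vz) i j :=
        (hGBe i j).comp (measurable_mulM hcoe measurable_const)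
      rw [MeasureTheory.Measure.inv, MeasureTheory.integral_map measurable_inv.aemeasurable
        hm9.aestronglyMeasurable]
      rfl
    rw [← h1, hswap, h3, hflip]
  ---- pointwise identity
  have hpoint : ∀ U : UG N, GA (Fz * (U : Matrix (Fin N) (Fin N) ℂ)) * D + D⁻¹ * GB (((U : Matrix (Fin N) (Fin N) ℂ))ᴴ * Vz) = 1 := by
    intro U
    have hU1 : ((U : Matrix (Fin N) (Fin N) ℂ) : Matrix (Fin N) (Fin N) ℂ) * ((U : Matrix (Fin N) (Fin N) ℂ))ᴴ = 1 := by
      rw [← Matrix.star_eq_conjTranspose]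
      exact Matrix.mem_unitaryGroup_iff.1 U.2
    have hU2 : (((U : Matrix (Fin N) (Fin N) ℂ) : Matrix (Fin N) (Fin N) ℂ))ᴴ * (U : Matrix (Fin N) (Fin N) ℂ) = 1 := by
      rw [← Matrix.star_eq_conjTranspose]
      exact Matrix.mem_unitaryGroup_iff'.1 U.2
    have hFp : (Fz * (U : Matrix (Fin N) (Fin N) ℂ)) * (Fz * (U : Matrix (Fin N) (Fin N) ℂ))ᴴ = 1 := by
      rw [Matrix.conjTranspose_mul]
      calc Fz * (U : Matrix (Fin N) (Fin N) ℂ) * (((U : Matrix (Fin N) (Fin N) ℂ))ᴴ * Fzᴴ) = Fz * ((U : Matrix (Fin N) (Fin N) ℂ) * ((U : Matrix (Fin N) (Fin N) ℂ))ᴴ) * Fzᴴ := by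
            simp only [Matrix.mul_assoc]
      _ = 1 := by rw [hU1, Matrix.mul_one, hFz, F0_unitary]
    have hVp : (((U : Matrix (Fin N) (Fin N) ℂ))ᴴ * Vz)ᴴ * (((U : Matrix (Fin N) (Fin N) ℂ))ᴴ * Vz) = 1 := by
      rw [Matrix.conjTranspose_mul, Matrix.conjTranspose_conjTranspose]
      calc Vzᴴ * (U : Matrix (Fin N) (Fin N) ℂ) * (((U : Matrix (Fin N) (Fin N) ℂ))ᴴ * Vz) = Vzᴴ * ((U : Matrix (Fin N) (Fin N) ℂ) * ((U : Matrix (Fin N) (Fin N) ℂ))ᴴ) * Vz := by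
            simp only [Matrix.mul_assoc]
      _ = 1 := by rw [hU1, Matrix.mul_one, hVz, V0_unitary]
    have hFVp : (Fz * (U : Matrix (Fin N) (Fin N) ℂ)) * (((U : Matrix (Fin N) (Fin N) ℂ))ᴴ * Vz) = 0 := by
      calc Fz * (U : Matrix (Fin N) (Fin N) ℂ) * (((U : Matrix (Fin N) (Fin N) ℂ))ᴴ * Vz) = Fz * ((U : Matrix (Fin N) (Fin N) ℂ) * ((U : Matrix (Fin N) (Fin N) ℂ))ᴴ) * Vz := by
            simp only [Matrix.mul_assoc]
      _ = 0 := by rw [hU1, Matrix.mul_one, hFz, hVz, F0_mul_V0]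
    exact det_id e d hd (Fz * (U : Matrix (Fin N) (Fin N) ℂ)) (((U : Matrix (Fin N) (Fin N) ℂ))ᴴ * Vz) hFp hVp hFVp
  ---- entrywise pointwise identity
  have hDinvDiag : D⁻¹ = Matrix.diagonal (fun i => ((d i : ℂ))⁻¹) := diag_inv d hd
  have hpt : ∀ (i j : Fin N) (U : UG N),
      GA (Fz * (U : Matrix (Fin N) (Fin N) ℂ)) i j * (d j : ℂ) + ((d i : ℂ))⁻¹ * GB (((U : Matrix (Fin N) (Fin N) ℂ))ᴴ * Vz) i j
        = (1 : Matrix (Fin N) (Fin N) ℂ) i j := by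
    intro i j U
    have h := congrArg (fun X : Matrix (Fin N) (Fin N) ℂ => X i j) (hpoint U)
    simpa [Matrix.add_apply, Matrix.mul_diagonal, hDinvDiag, Matrix.diagonal_mul, hD, diag_inv d hd]
      using h
  ---- integrability of the B side entries
  have hfBint : ∀ i j, Integrable (fun U : UG N => GB (((U : Matrix (Fin N) (Fin N) ℂ))ᴴ * Vz) i j) (haarUG N) := by
    intro i j
    have heq : (fun U : UG N => GB (((U : Matrix (Fin N) (Fin N) ℂ))ᴴ * Vz) i j)
        = fun U : UG N => (d i : ℂ) * ((1 : Matrix (Fin N) (Fin N) ℂ) i j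
            - GA (Fz * (U : Matrix (Fin N) (Fin N) ℂ)) i j * (d j : ℂ)) := by
      funext U
      have hdne : (d i : ℂ) ≠ 0 := by exact_mod_cast (hd i).ne'
      have h2 := eq_sub_of_add_eq' (hpt i j U)
      calc GB (((U : Matrix (Fin N) (Fin N) ℂ))ᴴ * Vz) i j
          = (d i : ℂ) * (((d i : ℂ))⁻¹ * GB (((U : Matrix (Fin N) (Fin N) ℂ))ᴴ * Vz) i j) :=
            (mul_inv_cancel_left₀ hdne _).symm
      _ = (d i : ℂ) * ((1 : Matrix (Fin N) (Fin N) ℂ) i j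
            - GA (Fz * (U : Matrix (Fin N) (Fin N) ℂ)) i j * (d j : ℂ)) := by rw [h2]
    rw [heq]
    exact (((integrable_const _).sub ((hfAint i j).mul_const _)).const_mul _)
  ---- the key scalar identity
  have hkey : ∀ i j, (∫ ω, GA (Φ ω) i j ∂μ) * (d j : ℂ)
      + ((d i : ℂ))⁻¹ * (∫ ω, GB (Ω₂ ω) i j ∂μ')
      = (1 : Matrix (Fin N) (Fin N) ℂ) i j := by
    intro i j
    rw [hEaA i j, hEbB i j]
    rw [← MeasureTheory.integral_mul_const, ← MeasureTheory.integral_const_mul,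
      ← MeasureTheory.integral_add ((hfAint i j).mul_const _) ((hfBint i j).const_mul _)]
    rw [integral_congr_ae (Filter.Eventually.of_forall fun U => hpt i j U)]
    simp [measure_univ]
  ---- diagonality of the A side
  have hdiagA : ∀ i j, i ≠ j → (∫ ω, GA (Φ ω) i j ∂μ) = 0 := by
    intro i j hij
    set ε : Fin N → ℂ := fun k => if k = i then -1 else 1 with hε
    set Θ : Matrix (Fin N) (Fin N) ℂ := Matrix.diagonal ε with hΘ
    have hεsq : ∀ k, ε k * star (ε k) = 1 := by
      intro k
      by_cases hk : k = i <;> simp [hε, hk]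
    have hΘH : Θᴴ = Matrix.diagonal (star ∘ ε) := by
      rw [hΘ, Matrix.diagonal_conjTranspose]
      rfl
    have hΘmem : Θ ∈ Matrix.unitaryGroup (Fin N) ℂ := by
      rw [Matrix.mem_unitaryGroup_iff, Matrix.star_eq_conjTranspose, hΘH, hΘ,
        Matrix.diagonal_mul_diagonal]
      have : (fun k => ε k * (star ∘ ε) k) = fun _ => (1 : ℂ) := funext fun k => hεsq k
      rw [this, Matrix.diagonal_one]
    have hΘD : Θ * D * Θᴴ = D := by
      rw [hΘH, hΘ, hD, Matrix.diagonal_mul_diagonal, Matrix.diagonal_mul_diagonal]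
      have hfn : (fun k => ε k * (d k : ℂ) * (star ∘ ε) k) = fun k => (d k : ℂ) := by
        funext k
        calc ε k * (d k : ℂ) * (star ∘ ε) k = (d k : ℂ) * (ε k * star (ε k)) := by
              simp only [Function.comp_apply]; ring
        _ = (d k : ℂ) := by rw [hεsq k, mul_one]
      rw [hfn]
    have hconj : ∀ M : Matrix (Fin L) (Fin N) ℂ, GA (M * Θ) i j = - GA M i j := by
      intro M
      have hmat : GA (M * Θ) = Θᴴ * GA M * Θ := by
        have hmid : (M * Θ) * D * (M * Θ)ᴴ = M * D * Mᴴ := by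
          rw [Matrix.conjTranspose_mul]
          calc M * Θ * D * (Θᴴ * Mᴴ) = M * (Θ * D * Θᴴ) * Mᴴ := by
                simp only [Matrix.mul_assoc]
          _ = M * D * Mᴴ := by rw [hΘD]
        show (M * Θ)ᴴ * ((M * Θ) * D * (M * Θ)ᴴ)⁻¹ * (M * Θ) = Θᴴ * GA M * Θ
        rw [hmid, Matrix.conjTranspose_mul]
        show Θᴴ * Mᴴ * (M * D * Mᴴ)⁻¹ * (M * Θ) = Θᴴ * (Mᴴ * (M * D * Mᴴ)⁻¹ * M) * Θ
        simp only [Matrix.mul_assoc]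
      rw [hmat, hΘH, hΘ]
      rw [Matrix.mul_diagonal, Matrix.diagonal_mul]
      simp only [Function.comp_apply, hε, if_pos rfl, if_neg (Ne.symm hij), star_neg, star_one,
        if_true]
      ring
    have hflip2 : ∫ ω, GA (Φ ω) i j ∂μ = ∫ ω, GA (Φ ω * Θ) i j ∂μ :=
      (integral_comp_eq (hInvΦ Θ hΘmem) (measurable_mulM hMeasΦ measurable_const) hMeasΦ
        (hGAe i j)).symm
    have hneg : ∫ ω, GA (Φ ω) i j ∂μ = - ∫ ω, GA (Φ ω) i j ∂μ := by
      conv_lhs => rw [hflip2]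
      rw [integral_congr_ae (Filter.Eventually.of_forall fun ω => hconj (Φ ω))]
      exact integral_neg _
    linear_combination hneg / 2
  ---- final assembly
  have hEntryA : ∀ i j, matExp μ (fun ω => (Φ ω)ᴴ * (Φ ω * D * (Φ ω)ᴴ)⁻¹ * Φ ω) i j
      = ∫ ω, GA (Φ ω) i j ∂μ := fun i j => rfl
  have hEntryB : ∀ i j, matExp μ' (fun ω => Ω₂ ω * ((Ω₂ ω)ᴴ * D⁻¹ * Ω₂ ω)⁻¹ * (Ω₂ ω)ᴴ) i j
      = ∫ ω, GB (Ω₂ ω) i j ∂μ' := fun i j => rfl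
  ext i j
  rw [Matrix.add_apply]
  have hDl : ∀ M : Matrix (Fin N) (Fin N) ℂ, (D * M) i j = (d i : ℂ) * M i j := fun M => by
    rw [hD, Matrix.diagonal_mul]
  have hDr : ∀ M : Matrix (Fin N) (Fin N) ℂ, (D⁻¹ * M) i j = ((d i : ℂ))⁻¹ * M i j := fun M => by
    rw [hD, diag_inv d hd, Matrix.diagonal_mul]
  rw [hDl, hDr, hEntryA i j, hEntryB i j]
  rcases eq_or_ne i j with rfl | hij
  · linear_combination hkey i i
  · have h0 := hdiagA i j hij
    have hk := hkey i j
    rw [h0] at hk ⊢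
    linear_combination hk
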